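/- Let G be a semigroup generated by a finite set U acting on ℝ^d by linear maps, and let G_n denote the set of products of at most n generators (including the empty product, the identity). Suppose a ∈ ℝ^d is such that the orbit Ga is not contained in any proper affine subspace of ℝ^d. Then G_d · a (the image of a under the ball of radius d in the Cayley graph) is not contained in any proper affine subspace of ℝ^d. -/

import Mathlib

/-- The ball of radius `n` in the Cayley graph of the semigroup generated by `U`:
all products of at most `n` elements of `U` (including the empty product). -/
def ballProd {V : Type*} [Monoid V] (U : Finset V) (n : ℕ) : Set V :=
  {g | ∃ l : List V, (∀ u ∈ l, u ∈ U) ∧ l.length ≤ n ∧ l.prod = g}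

/-- If the full orbit `G a` is not contained in any proper affine subspace of `ℝ^d`,
then already `G_d · a` is not contained in any proper affine subspace. -/
theorem stmt0 (d : ℕ) (U : Finset (Module.End ℝ (Fin d → ℝ))) (a : Fin d → ℝ)
    (h : ∀ (W : Submodule ℝ (Fin d → ℝ)) (v : Fin d → ℝ),
      (∀ n : ℕ, ∀ g ∈ ballProd U n, g a - v ∈ W) → W = ⊤) :
    ∀ (W : Submodule ℝ (Fin d → ℝ)) (v : Fin d → ℝ),
      (∀ g ∈ ballProd U d, g a - v ∈ W) → W = ⊤ := by
  classical
  -- the span of differences at radius n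
  set W : ℕ → Submodule ℝ (Fin d → ℝ) :=
    fun n => Submodule.span ℝ {x | ∃ g ∈ ballProd U n, g a - a = x} with hWdef
  have hballmono : ∀ {m n : ℕ}, m ≤ n → ballProd U m ⊆ ballProd U n := by
    rintro m n hmn g ⟨l, hl, hlen, hp⟩
    exact ⟨l, hl, hlen.trans hmn, hp⟩
  have hone : ∀ n, (1 : Module.End ℝ (Fin d → ℝ)) ∈ ballProd U n := fun n => ⟨[], by simp⟩
  have hmul : ∀ {u g n}, u ∈ U → g ∈ ballProd U n → u * g ∈ ballProd U (n + 1) := by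
    rintro u g n hu ⟨l, hl, hlen, hp⟩
    refine ⟨u :: l, ?_, ?_, ?_⟩
    · intro x hx
      rcases List.mem_cons.1 hx with rfl | hx
      · exact hu
      · exact hl x hx
    · simpa using Nat.succ_le_succ hlen
    · simp [hp]
  have hsplit : ∀ {g n}, g ∈ ballProd U (n + 1) →
      g ∈ ballProd U n ∨ ∃ u ∈ U, ∃ g' ∈ ballProd U n, g = u * g' := by
    rintro g n ⟨l, hl, hlen, hp⟩
    cases l with
    | nil => exact Or.inl ⟨[], by simp, by simp, hp⟩
    | cons u l' =>
      refine Or.inr ⟨u, hl u (by simp), l'.prod, ⟨l', fun x hx => hl x (by simp [hx]),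
        by simp at hlen; omega, rfl⟩, by simp [← hp]⟩
  have hmem : ∀ {n g}, g ∈ ballProd U n → g a - a ∈ W n :=
    fun hg => Submodule.subset_span ⟨_, hg, rfl⟩
  have hmono : ∀ {m n : ℕ}, m ≤ n → W m ≤ W n := by
    intro m n hmn
    exact Submodule.span_mono (by rintro x ⟨g, hg, rfl⟩; exact ⟨g, hballmono hmn hg, rfl⟩)
  -- once the chain stabilizes, it stays constant
  have hstab : ∀ n, W (n + 1) ≤ W n → ∀ m, W (n + m) = W n := by
    intro n hle m
    induction m with
    | zero => rfl
    | succ m ih =>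
      refine le_antisymm ?_ (hmono (Nat.le_add_right _ _))
      have key : W (n + m + 1) ≤ W (n + m) := by
        refine Submodule.span_le.2 ?_
        rintro x ⟨g, hg, rfl⟩
        rcases hsplit hg with hg' | ⟨u, hu, g', hg', rfl⟩
        · exact hmem hg'
        · have hu1 : u a - a ∈ W (n + m) := by
            rw [ih]
            exact hle (hmono (Nat.one_le_iff_ne_zero.2 (by simp)) (hmem (hmul hu (hone 0))))
          have hmap : Submodule.map u (W n) ≤ W n := by
            rw [Submodule.map_span, Submodule.span_le]
            rintro _ ⟨_, ⟨g'', hg'', rfl⟩, rfl⟩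
            have h1 : (u * g'') a - a ∈ W n := hle (hmem (hmul hu hg''))
            have h2 : u a - a ∈ W n := hle (hmem (hmul hu (hone n)))
            have : u (g'' a - a) = ((u * g'') a - a) - (u a - a) := by
              simp [Module.End.mul_apply, map_sub]
            rw [this]
            exact sub_mem h1 h2
          have hg'a : g' a - a ∈ W (n + m) := hmem hg'
          have huga : u (g' a - a) ∈ W (n + m) := by
            rw [ih] at hg'a ⊢
            exact hmap ⟨_, hg'a, rfl⟩
          have : (u * g') a - a = u (g' a - a) + (u a - a) := by
            simp [Module.End.mul_apply, map_sub]
          rw [this]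
          exact add_mem huga hu1
      calc W (n + (m + 1)) = W (n + m + 1) := by ring_nf
        _ ≤ W (n + m) := key
        _ = W n := ih
  -- the crucial bound: every W m is contained in W d
  have hWd : ∀ m, W m ≤ W d := by
    by_cases hc : ∃ n, n < d ∧ W (n + 1) ≤ W n
    · obtain ⟨n, hnd, hle⟩ := hc
      intro m
      rcases le_or_gt m d with hm | hm
      · exact hmono hm
      · have h1 : W m = W n := by
          have := hstab n hle (m - n)
          rwa [Nat.add_sub_cancel' (hnd.trans hm).le] at this
        have h2 : W d = W n := by
          have := hstab n hle (d - n)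
          rwa [Nat.add_sub_cancel' hnd.le] at this
        rw [h1, h2]
    · push_neg at hc
      have hstrict : ∀ n, n < d → W n < W (n + 1) := fun n hn =>
        lt_of_le_not_ge (hmono (Nat.le_succ n)) (hc n hn)
      have hrank : ∀ n, n ≤ d → n ≤ Module.finrank ℝ (W n) := by
        intro n hn
        induction n with
        | zero => simp
        | succ k ih =>
          have hk := ih (Nat.le_of_succ_le hn)
          have := Submodule.finrank_lt_finrank_of_lt (hstrict k (Nat.lt_of_succ_le hn))
          omega
      have htop : W d = ⊤ := by
        have h1 : d ≤ Module.finrank ℝ (W d) := hrank d le_rfl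
        have h2 : Module.finrank ℝ (W d) ≤ Module.finrank ℝ (Fin d → ℝ) := Submodule.finrank_le _
        have h3 : Module.finrank ℝ (Fin d → ℝ) = d := by
          simp [Module.finrank_pi]
        exact Submodule.eq_top_of_finrank_eq (by omega)
      intro m
      rw [htop]
      exact le_top
  -- conclude
  intro W' v hW'
  have hav : a - v ∈ W' := by
    have := hW' 1 (hone d)
    simpa using this
  have hWdW' : W d ≤ W' := by
    refine Submodule.span_le.2 ?_
    rintro x ⟨g, hg, rfl⟩
    have h1 : g a - v ∈ W' := hW' g hg
    have : g a - a = (g a - v) - (a - v) := by abel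
    rw [this]
    exact sub_mem h1 hav
  refine h W' v ?_
  intro n g hg
  have h1 : g a - a ∈ W' := hWdW' (hWd n (hmem hg))
  have : g a - v = (g a - a) + (a - v) := by abel
  rw [this]
  exact add_mem h1 hav
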